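/- If n ≡ 1 (mod 3) and n ≥ 4, then the number of minimum dominating sets of the cycle C_n equals (n^2 + 5n)/6. -/

import Mathlib

open Finset SimpleGraph

/-- `S` is a dominating set of `G`: every vertex outside `S` has a neighbor in `S`. -/
def domSet {V : Type*} (G : SimpleGraph V) (S : Finset V) : Prop :=
  ∀ v, v ∉ S → ∃ u ∈ S, G.Adj u v

/-- The domination number `γ(G)`: least cardinality of a dominating set. -/
noncomputable def domNum {V : Type*} [Fintype V] (G : SimpleGraph V) : ℕ :=
  sInf {k | ∃ S : Finset V, domSet G S ∧ S.card = k}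

/-- The dominion `ζ(G)`: the number of dominating sets of minimum cardinality. -/
noncomputable def dominion {V : Type*} [Fintype V] (G : SimpleGraph V) : ℕ :=
  Nat.card {S : Finset V // domSet G S ∧ S.card = domNum G}

namespace Zeta

open Fin.NatCast Fin.CommRing

abbrev V (k : ℕ) := Fin (3*k+1)

lemma valcast (k p : ℕ) : ((p : V k)).val = p % (3*k+1) := Fin.val_natCast p _

lemma valcast' (k p : ℕ) (h : p < 3*k+1) : ((p : V k)).val = p := by
  rw [valcast]; exact Nat.mod_eq_of_lt h

lemma val1 (k : ℕ) (hk : 1 ≤ k) : (1 : V k).val = 1 := by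
  simpa using valcast' k 1 (by omega)

lemma adj_iff (k : ℕ) (hk : 1 ≤ k) (u v : V k) :
    (cycleGraph (3*k+1)).Adj u v ↔ u - v = 1 ∨ v - u = 1 := by
  rw [cycleGraph_adj']
  constructor
  · rintro (h | h); · left; exact Fin.ext (by rw [val1 k hk]; exact h)
    · right; exact Fin.ext (by rw [val1 k hk]; exact h)
  · rintro (h | h); · left; rw [h, val1 k hk]
    · right; rw [h, val1 k hk]

lemma cast_inj_lt (k p q : ℕ) (hp : p < 3*k+1) (hq : q < 3*k+1)
    (h : ((p : V k)) = q) : p = q := by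
  have := congrArg Fin.val h
  rwa [valcast' k p hp, valcast' k q hq] at this

lemma add_cast_inj (k : ℕ) (a : V k) (p q : ℕ)
    (h : a + (p : V k) = a + (q : V k)) : p % (3*k+1) = q % (3*k+1) := by
  have h2 := congrArg Fin.val (add_left_cancel h)
  rwa [valcast, valcast] at h2

lemma add_cast_congr (k : ℕ) (a : V k) (p q : ℕ) (h : p % (3*k+1) = q % (3*k+1)) :
    a + (p : V k) = a + (q : V k) := by
  congr 1
  rw [Fin.ext_iff, valcast, valcast, h]

lemma modeq_cases (n p q : ℕ) (hn : 0 < n) (h : p % n = q % n) (hp : p < 2*n) (hq : q < 2*n) :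
    p = q ∨ p + n = q ∨ q + n = p := by
  have h1 := Nat.div_add_mod p n
  have h2 := Nat.div_add_mod q n
  have hp1 : p / n ≤ 1 := by
    by_contra hc
    have h3 : 2 ≤ p / n := by omega
    have := Nat.mul_le_mul_left n h3
    have := Nat.mul_div_le p n
    omega
  have hq1 : q / n ≤ 1 := by
    by_contra hc
    have h3 : 2 ≤ q / n := by omega
    have := Nat.mul_le_mul_left n h3
    have := Nat.mul_div_le q n
    omega
  have hpm : p % n < n := Nat.mod_lt _ hn
  have hqm : q % n < n := Nat.mod_lt _ hn
  interval_cases hh : p / n <;> interval_cases hh2 : q / n <;> omega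

variable {k : ℕ}

/-- Window form of domination. -/
def DomW (S : Finset (V k)) : Prop := ∀ v : V k, v ∈ S ∨ v + 1 ∈ S ∨ v - 1 ∈ S

lemma dom_iff (hk : 1 ≤ k) (S : Finset (V k)) :
    domSet (cycleGraph (3*k+1)) S ↔ DomW S := by
  constructor
  · intro h v
    by_cases hv : v ∈ S
    · exact Or.inl hv
    · obtain ⟨u, hu, hadj⟩ := h v hv
      rw [adj_iff k hk] at hadj
      rcases hadj with h1 | h1
      · right; left
        have h2 : u = v + 1 := by linear_combination h1
        rwa [← h2]
      · right; right
        have h2 : u = v - 1 := by linear_combination -h1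
        rwa [← h2]
  · intro h v hv
    rcases h v with h1 | h1 | h1
    · exact absurd h1 hv
    · exact ⟨v + 1, h1, by rw [adj_iff k hk]; left; ring⟩
    · exact ⟨v - 1, h1, by rw [adj_iff k hk]; right; ring⟩

lemma window (S : Finset (V k)) (h : DomW S) (v : V k) :
    v + 1 ∈ S ∨ v + 2 ∈ S ∨ v + 3 ∈ S := by
  rcases h (v + 2) with h1 | h1 | h1
  · right; left; exact h1
  · right; right; rwa [show v + 2 + 1 = v + 3 by ring] at h1
  · left; rwa [show v + 2 - 1 = v + 1 by ring] at h1

/-- step length to the next element of `S`. -/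
def tS (S : Finset (V k)) (a : V k) : ℕ :=
  if a + 1 ∈ S then 1 else if a + 2 ∈ S then 2 else 3

lemma tS_spec (S : Finset (V k)) (h : DomW S) (a : V k) :
    (tS S a = 1 ∧ a + 1 ∈ S) ∨ (tS S a = 2 ∧ a + 1 ∉ S ∧ a + 2 ∈ S) ∨
    (tS S a = 3 ∧ a + 1 ∉ S ∧ a + 2 ∉ S ∧ a + 3 ∈ S) := by
  unfold tS
  split_ifs with h1 h2
  · exact Or.inl ⟨rfl, h1⟩
  · exact Or.inr (Or.inl ⟨rfl, h1, h2⟩)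
  · refine Or.inr (Or.inr ⟨rfl, h1, h2, ?_⟩)
    rcases window S h a with h3 | h3 | h3
    · exact absurd h3 h1
    · exact absurd h3 h2
    · exact h3

lemma tS_pos (S : Finset (V k)) (a : V k) : 1 ≤ tS S a := by
  unfold tS; split_ifs <;> omega

lemma tS_le3 (S : Finset (V k)) (a : V k) : tS S a ≤ 3 := by
  unfold tS; split_ifs <;> omega

lemma next_mem (S : Finset (V k)) (h : DomW S) (a : V k) :
    a + ((tS S a : ℕ) : V k) ∈ S := by
  rcases tS_spec S h a with ⟨h1, h2⟩ | ⟨h1, _, h2⟩ | ⟨h1, _, _, h2⟩ <;>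
    · rw [h1]; push_cast; exact h2

lemma next_inj (hk : 1 ≤ k) (S : Finset (V k)) (h : DomW S) (a b : V k)
    (ha : a ∈ S) (hb : b ∈ S)
    (heq : a + ((tS S a : ℕ) : V k) = b + ((tS S b : ℕ) : V k)) : a = b := by
  rcases tS_spec S h a with ⟨h1, h2⟩ | ⟨h1, h2, h3⟩ | ⟨h1, h2, h3, h4⟩ <;>
  rcases tS_spec S h b with ⟨g1, g2⟩ | ⟨g1, g2, g3⟩ | ⟨g1, g2, g3, g4⟩ <;>
  rw [h1, g1] at heq <;> push_cast at heq
  · exact add_right_cancel heq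
  · exact absurd (by rw [show (b + 1 : V k) = a by linear_combination -heq]; exact ha) g2
  · exact absurd (by rw [show (b + 2 : V k) = a by linear_combination -heq]; exact ha) g3
  · exact absurd (by rw [show (a + 1 : V k) = b by linear_combination heq]; exact hb) h2
  · exact add_right_cancel heq
  · exact absurd (by rw [show (b + 1 : V k) = a by linear_combination -heq]; exact ha) g2
  · exact absurd (by rw [show (a + 2 : V k) = b by linear_combination heq]; exact hb) h3
  · exact absurd (by rw [show (a + 1 : V k) = b by linear_combination heq]; exact hb) h2
  · exact add_right_cancel heq

/-- predecessor map used for the lower bound. -/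
def GS (S : Finset (V k)) (v : V k) : V k :=
  if v - 1 ∈ S then v - 1 else if v - 2 ∈ S then v - 2 else v - 3

lemma GS_mem (S : Finset (V k)) (h : DomW S) (v : V k) : GS S v ∈ S := by
  unfold GS
  split_ifs with h1 h2
  · exact h1
  · exact h2
  · rcases window S h (v - 4) with h3 | h3 | h3
    · rwa [show v - 4 + 1 = v - 3 by ring] at h3
    · exact absurd (by rwa [show v - 4 + 2 = v - 2 by ring] at h3) h2
    · exact absurd (by rwa [show v - 4 + 3 = v - 1 by ring] at h3) h1

lemma GS_fiber (S : Finset (V k)) (v : V k) (a : V k) (h : GS S v = a) :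
    v = a + 1 ∨ v = a + 2 ∨ v = a + 3 := by
  unfold GS at h
  split_ifs at h
  · left; rw [← h]; ring
  · right; left; rw [← h]; ring
  · right; right; rw [← h]; ring

lemma lower_bound (hk : 1 ≤ k) (S : Finset (V k)) (h : DomW S) :
    3*k+1 ≤ 3 * S.card := by
  have hm : ∀ v ∈ (univ : Finset (V k)), GS S v ∈ S := fun v _ => GS_mem S h v
  have hf : ∀ a ∈ S, ((univ : Finset (V k)).filter (fun v => GS S v = a)).card ≤ 3 := by
    intro a _
    have hsub : (univ : Finset (V k)).filter (fun v => GS S v = a) ⊆ {a+1, a+2, a+3} := by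
      intro v hv
      simp only [mem_filter] at hv
      rcases GS_fiber S v a hv.2 with h1 | h1 | h1 <;> simp [h1]
    calc ((univ : Finset (V k)).filter (fun v => GS S v = a)).card
        ≤ ({a+1, a+2, a+3} : Finset (V k)).card := card_le_card hsub
      _ ≤ 3 := by
        apply le_trans (card_insert_le _ _)
        apply Nat.succ_le_succ
        apply le_trans (card_insert_le _ _)
        simp
  have := Finset.card_le_mul_card_image_of_maps_to hm 3 hf
  simpa using this


def orb (S : Finset (V k)) (a : V k) : ℕ → V k
  | 0 => a
  | i+1 => orb S a i + ((tS S (orb S a i) : ℕ) : V k)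

def sig (S : Finset (V k)) (a : V k) : ℕ → ℕ
  | 0 => 0
  | i+1 => sig S a i + tS S (orb S a i)

lemma orb_mem (S : Finset (V k)) (h : DomW S) (a : V k) (ha : a ∈ S) :
    ∀ i, orb S a i ∈ S
  | 0 => ha
  | i+1 => next_mem S h _

lemma orb_eq (S : Finset (V k)) (a : V k) :
    ∀ i, orb S a i = a + ((sig S a i : ℕ) : V k)
  | 0 => by simp [orb, sig]
  | i+1 => by
      rw [orb, sig, orb_eq S a i]
      push_cast
      ring

lemma sig_strictMono (S : Finset (V k)) (a : V k) : StrictMono (sig S a) := by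
  apply strictMono_nat_of_lt_succ
  intro i
  have := tS_pos S (orb S a i)
  simp only [sig]
  omega

lemma sig_le (S : Finset (V k)) (a : V k) : ∀ i, sig S a i ≤ 3 * i
  | 0 => le_refl _
  | i+1 => by
      have := sig_le S a i
      have := tS_le3 S (orb S a i)
      simp only [sig]
      omega

lemma sig_sum (S : Finset (V k)) (a : V k) :
    ∀ m, sig S a m = ∑ i ∈ range m, tS S (orb S a i)
  | 0 => by simp [sig]
  | m+1 => by rw [sum_range_succ, ← sig_sum S a m]; rfl

lemma orb_inj (S : Finset (V k)) (a : V k) {i j : ℕ} (hi : i ≤ k) (hj : j ≤ k)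
    (h : orb S a i = orb S a j) : i = j := by
  rw [orb_eq, orb_eq] at h
  have h2 := add_cast_inj k a _ _ h
  have b1 := sig_le S a i
  have b2 := sig_le S a j
  rw [Nat.mod_eq_of_lt (by omega), Nat.mod_eq_of_lt (by omega)] at h2
  exact (sig_strictMono S a).injective h2

lemma orb_add (S : Finset (V k)) (a : V k) (i : ℕ) :
    ∀ j, orb S a (i + j) = orb S (orb S a i) j
  | 0 => rfl
  | j+1 => by
      rw [show i + (j+1) = (i + j) + 1 from rfl, orb, orb, orb_add S a i j]

section Struct

variable (hk : 1 ≤ k) (S : Finset (V k)) (hdom : DomW S) (hcard : S.card = k + 1)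

include hk hdom hcard

lemma image_eq (a : V k) (ha : a ∈ S) :
    (range (k+1)).image (orb S a) = S := by
  apply Finset.eq_of_subset_of_card_le
  · intro x hx
    simp only [mem_image, mem_range] at hx
    obtain ⟨i, _, rfl⟩ := hx
    exact orb_mem S hdom a ha i
  · rw [Finset.card_image_of_injOn, card_range, hcard]
    intro i hi j hj h
    simp only [coe_range, Set.mem_Iio] at hi hj
    exact orb_inj S a (by omega) (by omega) h

lemma orb_period0 (a : V k) (ha : a ∈ S) : orb S a (k+1) = a := by
  have hmem : orb S a (k+1) ∈ (range (k+1)).image (orb S a) := by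
    rw [image_eq hk S hdom hcard a ha]
    exact orb_mem S hdom a ha _
  simp only [mem_image, mem_range] at hmem
  obtain ⟨i, hi, hI⟩ := hmem
  rcases Nat.eq_zero_or_pos i with h0 | hpos
  · rw [h0] at hI; exact hI.symm
  · exfalso
    obtain ⟨m, rfl⟩ : ∃ m, i = m + 1 := ⟨i - 1, by omega⟩
    have h2 : orb S a m = orb S a k := by
      apply next_inj hk S hdom _ _ (orb_mem S hdom a ha m) (orb_mem S hdom a ha k)
      exact hI
    have := orb_inj S a (i := m) (j := k) (by omega) (by omega) h2
    omega

lemma sig_total (a : V k) (ha : a ∈ S) : sig S a (k+1) = 3*k+1 := by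
  have h0 := orb_period0 hk S hdom hcard a ha
  rw [orb_eq] at h0
  have h1 : a + ((sig S a (k+1) : ℕ) : V k) = a + ((0 : ℕ) : V k) := by
    rw [h0]; simp
  have h2 := add_cast_inj k a _ _ h1
  rw [Nat.zero_mod] at h2
  have hd := Nat.dvd_of_mod_eq_zero h2
  obtain ⟨c, hc⟩ := hd
  have hub : sig S a (k+1) ≤ 3*(k+1) := sig_le S a (k+1)
  have hlb : 0 < sig S a (k+1) := by
    have := sig_strictMono S a (show 0 < k+1 by omega)
    simpa [sig] using this
  have hc3 : c = 0 ∨ c = 1 ∨ 2 ≤ c := by omega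
  rcases hc3 with rfl | rfl | hc3
  · omega
  · omega
  · exfalso
    have := Nat.mul_le_mul_left (3*k+1) hc3
    omega

lemma orb_periodic (a : V k) (ha : a ∈ S) : ∀ i, orb S a (i + (k+1)) = orb S a i := by
  intro i
  induction i with
  | zero => rw [Nat.zero_add]; exact orb_period0 hk S hdom hcard a ha
  | succ i ih =>
      have h1 : (i+1) + (k+1) = (i + (k+1)) + 1 := by omega
      rw [h1, orb, ih]
      rfl

lemma orb_mod (a : V k) (ha : a ∈ S) : ∀ i, orb S a i = orb S a (i % (k+1)) := by
  intro i
  induction i using Nat.strong_induction_on with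
  | _ i ih =>
    rcases Nat.lt_or_ge i (k+1) with h | h
    · rw [Nat.mod_eq_of_lt h]
    · have h1 : i = (i - (k+1)) + (k+1) := by omega
      rw [h1, orb_periodic hk S hdom hcard a ha, ih _ (by omega)]
      congr 1
      rw [Nat.add_mod_right]

end Struct


/-- offset sequence of a canonical minimum dominating set. -/
def gval (d j : ℕ) : ℕ := if j = 0 then 0 else if j ≤ d then 3*j - 1 else 3*j - 2

lemma gval_le (d j : ℕ) (hj : j ≤ k) : gval d j ≤ 3*k - 1 := by
  unfold gval; split_ifs <;> (try exact (by assumption : False).elim) <;> omega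

lemma gval_mono (d : ℕ) {i j : ℕ} (hij : i < j) : gval d i < gval d j := by
  unfold gval; split_ifs <;> (try exact (by assumption : False).elim) <;> omega

/-- canonical candidate dominating sets. -/
def F (a : V k) (d : ℕ) : Finset (V k) :=
  (range (k+1)).image (fun j => a + ((gval d j : ℕ) : V k))

lemma sum_eq_two (m : ℕ) (e : ℕ → ℕ) (h : ∑ i ∈ range m, e i = 2) :
    (∃ i, i < m ∧ e i = 2 ∧ ∀ j, j < m → j ≠ i → e j = 0) ∨
    (∃ i j, i < j ∧ j < m ∧ e i = 1 ∧ e j = 1 ∧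
      ∀ l, l < m → l ≠ i → l ≠ j → e l = 0) := by
  classical
  set T := (range m).filter (fun i => e i ≠ 0) with hT
  have hsum : ∑ i ∈ T, e i = 2 := by
    rw [hT, Finset.sum_filter_ne_zero]; exact h
  have hTsub : ∀ i ∈ T, 1 ≤ e i := by
    intro i hi
    rw [hT, mem_filter] at hi
    omega
  have hcard : T.card ≤ 2 := by
    have h1 : ∑ _i ∈ T, 1 ≤ ∑ i ∈ T, e i := Finset.sum_le_sum hTsub
    rw [Finset.sum_const, smul_eq_mul, mul_one] at h1
    omega
  have hnotT : ∀ j, j < m → j ∉ T → e j = 0 := by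
    intro j hj hjT
    by_contra hc
    exact hjT (by rw [hT, mem_filter]; exact ⟨mem_range.mpr hj, hc⟩)
  have hTm : ∀ j ∈ T, j < m := by
    intro j hj; rw [hT, mem_filter, mem_range] at hj; exact hj.1
  have hne : T.Nonempty := by
    by_contra hc
    rw [Finset.not_nonempty_iff_eq_empty] at hc
    rw [hc, Finset.sum_empty] at hsum
    omega
  have h12 : T.card = 1 ∨ T.card = 2 := by
    have := Finset.card_pos.mpr hne
    omega
  rcases h12 with h1 | h2
  · obtain ⟨i, hi⟩ := Finset.card_eq_one.mp h1
    left
    have hiT : i ∈ T := by rw [hi]; exact mem_singleton_self i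
    refine ⟨i, hTm i hiT, ?_, ?_⟩
    · rw [hi, Finset.sum_singleton] at hsum; exact hsum
    · intro j hj hji
      apply hnotT j hj
      rw [hi, mem_singleton]
      exact hji
  · obtain ⟨x, y, hxy, hT2⟩ := Finset.card_eq_two.mp h2
    have hxT : x ∈ T := by rw [hT2]; simp
    have hyT : y ∈ T := by rw [hT2]; simp
    have hsum2 : e x + e y = 2 := by
      rw [hT2, Finset.sum_pair hxy] at hsum; exact hsum
    have hex : e x = 1 := by have := hTsub x hxT; have := hTsub y hyT; omega
    have hey : e y = 1 := by have := hTsub x hxT; have := hTsub y hyT; omega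
    have hrest : ∀ l, l < m → l ≠ x → l ≠ y → e l = 0 := by
      intro l hl hlx hly
      apply hnotT l hl
      rw [hT2, mem_insert, mem_singleton]
      tauto
    right
    rcases lt_or_gt_of_ne hxy with hlt | hgt
    · exact ⟨x, y, hlt, hTm y hyT, hex, hey, hrest⟩
    · exact ⟨y, x, hgt, hTm x hxT, hey, hex, fun l hl h1 h2 => hrest l hl h2 h1⟩

lemma mod_window (i₀ j : ℕ) (hi₀ : i₀ ≤ k) (hj : j ≤ k) :
    (i₀ + j) % (k+1) = if i₀ + j ≤ k then i₀ + j else i₀ + j - (k+1) := by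
  split_ifs with h
  · exact Nat.mod_eq_of_lt (by omega)
  · rw [Nat.mod_eq_sub_mod (by omega)]
    exact Nat.mod_eq_of_lt (by omega)

section Struct2

variable (hk : 1 ≤ k) (S : Finset (V k)) (hdom : DomW S) (hcard : S.card = k + 1)

include hk hdom hcard

lemma esum (a : V k) (ha : a ∈ S) :
    ∑ i ∈ range (k+1), (3 - tS S (orb S a i)) = 2 := by
  have h1 : sig S a (k+1) = 3*k+1 := sig_total hk S hdom hcard a ha
  rw [sig_sum] at h1
  have h2 : ∑ i ∈ range (k+1), ((3 - tS S (orb S a i)) + tS S (orb S a i)) = 3*(k+1) := by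
    have h3 : ∀ i ∈ range (k+1), (3 - tS S (orb S a i)) + tS S (orb S a i) = 3 := by
      intro i _
      have := tS_le3 S (orb S a i)
      omega
    rw [Finset.sum_congr rfl h3, Finset.sum_const, card_range, smul_eq_mul]
    ring
  rw [Finset.sum_add_distrib, h1] at h2
  omega

lemma sig_eq_gval (a₀ : V k) (d : ℕ) (hd : d ≤ k)
    (h0 : tS S a₀ = if d = 0 then 1 else 2)
    (hj : ∀ j, 1 ≤ j → j ≤ k → tS S (orb S a₀ j) = if j = d then 2 else 3) :
    ∀ j, j ≤ k → sig S a₀ j = gval d j := by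
  intro j
  induction j with
  | zero => intro _; simp [sig, gval]
  | succ j ih =>
      intro hjk
      have hsig : sig S a₀ (j+1) = sig S a₀ j + tS S (orb S a₀ j) := rfl
      rcases Nat.eq_zero_or_pos j with rfl | hj1
      · have h00 : sig S a₀ 0 = 0 := rfl
        have horb : orb S a₀ 0 = a₀ := rfl
        have hg1 : gval d 1 = if 1 ≤ d then 2 else 1 := by
          unfold gval; split_ifs <;> (try exact (by assumption : False).elim) <;> omega
        rw [hsig, horb, h00, h0, hg1]
        split_ifs <;> omega
      · have hIH := ih (by omega)
        have htj := hj j (by omega) (by omega)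
        have hgj : gval d j = if j ≤ d then 3*j-1 else 3*j-2 := by
          unfold gval; split_ifs <;> (try exact (by assumption : False).elim) <;> omega
        have hgj1 : gval d (j+1) = if j+1 ≤ d then 3*(j+1)-1 else 3*(j+1)-2 := by
          unfold gval; split_ifs <;> (try exact (by assumption : False).elim) <;> omega
        rw [hsig, hIH, htj, hgj, hgj1]
        split_ifs <;> omega

theorem struct :
    (∃ a, S = F a 0) ∨
    (∃ a d, 1 ≤ d ∧ d ≤ k ∧ S = F a d ∧
      S = F (a + ((3*d-1 : ℕ) : V k)) (k+1-d) ∧ a + ((3*d-1:ℕ) : V k) ≠ a) := by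
  have hne : S.Nonempty := Finset.card_pos.mp (by omega)
  obtain ⟨b, hb⟩ := hne
  have hsum2 := esum hk S hdom hcard b hb
  have htail : ∀ (i₀ : ℕ), i₀ ≤ k → orb S b i₀ ∈ S := fun i₀ _ => orb_mem S hdom b hb i₀
  -- helper to express orb S a₀ j in terms of orb S b
  have hshift : ∀ (i₀ : ℕ), i₀ ≤ k → ∀ j, orb S (orb S b i₀) j = orb S b ((i₀ + j) % (k+1)) := by
    intro i₀ hi₀ j
    rw [← orb_add, orb_mod hk S hdom hcard b hb]
  rcases sum_eq_two (k+1) _ hsum2 with ⟨i₀, hi₀m, he2, hrest⟩ | ⟨i₀, i₁, hij, hi₁m, he1, he1', hrest⟩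
  · -- case A : one step of length 1
    left
    set a₀ := orb S b i₀ with ha₀
    have hi₀k : i₀ ≤ k := by omega
    have ha₀S : a₀ ∈ S := htail i₀ hi₀k
    have ht1 : tS S a₀ = 1 := by
      have := tS_le3 S (orb S b i₀)
      have := tS_pos S (orb S b i₀)
      omega
    have htj : ∀ j, 1 ≤ j → j ≤ k → tS S (orb S a₀ j) = 3 := by
      intro j hj1 hjk
      rw [hshift i₀ hi₀k j]
      set m := (i₀ + j) % (k+1) with hm
      have hmw := mod_window i₀ j hi₀k hjk
      have hmne : m ≠ i₀ := by rw [hm, hmw]; split_ifs <;> omega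
      have hmk : m < k+1 := by rw [hm, hmw]; split_ifs <;> omega
      have := hrest m hmk hmne
      have := tS_le3 S (orb S b m)
      omega
    have hsig := sig_eq_gval hk S hdom hcard a₀ 0 (by omega)
      (by rw [ht1]; split_ifs <;> omega)
      (by intro j h1 h2; rw [htj j h1 h2]; split_ifs <;> omega)
    refine ⟨a₀, ?_⟩
    rw [← image_eq hk S hdom hcard a₀ ha₀S]
    unfold F
    apply Finset.image_congr
    intro j hj
    simp only [coe_range, Set.mem_Iio] at hj
    rw [orb_eq, hsig j (by omega)]
  · -- case B : two steps of length 2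
    right
    have hi₀k : i₀ ≤ k := by omega
    have hi₁k : i₁ ≤ k := by omega
    set a₀ := orb S b i₀ with ha₀
    set a₁ := orb S b i₁ with ha₁
    set d := i₁ - i₀ with hdd
    have hd1 : 1 ≤ d := by omega
    have hdk : d ≤ k := by omega
    have ha₀S : a₀ ∈ S := htail i₀ hi₀k
    have ha₁S : a₁ ∈ S := htail i₁ hi₁k
    have ht0 : tS S a₀ = 2 := by
      have := tS_le3 S (orb S b i₀); omega
    have ht1 : tS S a₁ = 2 := by
      have := tS_le3 S (orb S b i₁); omega
    have htmm : ∀ m, m ≤ k → m ≠ i₀ → m ≠ i₁ → tS S (orb S b m) = 3 := by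
      intro m h1 h2 h3
      have := hrest m (by omega) h2 h3
      have := tS_le3 S (orb S b m)
      omega
    -- root at a₀
    have htj : ∀ j, 1 ≤ j → j ≤ k → tS S (orb S a₀ j) = if j = d then 2 else 3 := by
      intro j hj1 hjk
      rw [hshift i₀ hi₀k j]
      set m := (i₀ + j) % (k+1) with hm
      have hmw := mod_window i₀ j hi₀k hjk
      have hmk : m ≤ k := by rw [hm, hmw]; split_ifs <;> omega
      have hmne : m ≠ i₀ := by rw [hm, hmw]; split_ifs <;> omega
      split_ifs with hjd
      · have : m = i₁ := by rw [hm, hmw]; split_ifs <;> omega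
        rw [this]; exact ht1
      · have : m ≠ i₁ := by rw [hm, hmw]; split_ifs <;> omega
        exact htmm m hmk hmne this
    have hsig := sig_eq_gval hk S hdom hcard a₀ d hdk
      (by rw [ht0]; split_ifs <;> omega) htj
    have hSF : S = F a₀ d := by
      rw [← image_eq hk S hdom hcard a₀ ha₀S]
      unfold F
      apply Finset.image_congr
      intro j hj
      simp only [coe_range, Set.mem_Iio] at hj
      rw [orb_eq, hsig j (by omega)]
    -- the partner relation
    have ha₁eq : a₁ = a₀ + ((3*d-1 : ℕ) : V k) := by
      have h1 : orb S a₀ d = a₁ := by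
        rw [hshift i₀ hi₀k d]
        congr 1
        rw [mod_window i₀ d hi₀k hdk]
        split_ifs <;> omega
      rw [← h1, orb_eq, hsig d hdk]
      congr 2
      unfold gval
      split_ifs <;> (try exact (by assumption : False).elim) <;> omega
    -- root at a₁
    set d' := k + 1 - d with hdd'
    have hd'1 : 1 ≤ d' := by omega
    have hd'k : d' ≤ k := by omega
    have htj' : ∀ j, 1 ≤ j → j ≤ k → tS S (orb S a₁ j) = if j = d' then 2 else 3 := by
      intro j hj1 hjk
      rw [hshift i₁ hi₁k j]
      set m := (i₁ + j) % (k+1) with hm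
      have hmw := mod_window i₁ j hi₁k hjk
      have hmk : m ≤ k := by rw [hm, hmw]; split_ifs <;> omega
      have hmne : m ≠ i₁ := by rw [hm, hmw]; split_ifs <;> omega
      split_ifs with hjd
      · have : m = i₀ := by rw [hm, hmw]; split_ifs <;> omega
        rw [this]; exact ht0
      · have : m ≠ i₀ := by rw [hm, hmw]; split_ifs <;> omega
        exact htmm m hmk this hmne
    have hsig' := sig_eq_gval hk S hdom hcard a₁ d' hd'k
      (by rw [ht1]; split_ifs <;> omega) htj'
    have hSF' : S = F a₁ d' := by
      rw [← image_eq hk S hdom hcard a₁ ha₁S]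
      unfold F
      apply Finset.image_congr
      intro j hj
      simp only [coe_range, Set.mem_Iio] at hj
      rw [orb_eq, hsig' j (by omega)]
    have hne01 : a₁ ≠ a₀ := by
      intro hcon
      have := orb_inj S b hi₁k hi₀k hcon
      omega
    refine ⟨a₀, d, hd1, hdk, hSF, ?_, ?_⟩
    · rw [← ha₁eq, ← hdd']; exact hSF'
    · rw [← ha₁eq]; exact hne01

end Struct2


section FProps

variable (hk : 1 ≤ k)

lemma mem_F {a : V k} {d : ℕ} {x : V k} :
    x ∈ F a d ↔ ∃ j, j ≤ k ∧ x = a + ((gval d j : ℕ) : V k) := by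
  unfold F
  simp only [mem_image, mem_range, Nat.lt_succ_iff]
  constructor
  · rintro ⟨j, hj, rfl⟩; exact ⟨j, hj, rfl⟩
  · rintro ⟨j, hj, rfl⟩; exact ⟨j, hj, rfl⟩

include hk

lemma card_F (a : V k) (d : ℕ) (hd : d ≤ k) : (F a d).card = k + 1 := by
  unfold F
  rw [Finset.card_image_of_injOn, card_range]
  intro i hi j hj h
  simp only [coe_range, Set.mem_Iio] at hi hj
  have h2 := add_cast_inj k a _ _ h
  have b1 := gval_le (k := k) d i (by omega)
  have b2 := gval_le (k := k) d j (by omega)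
  rw [Nat.mod_eq_of_lt (by omega), Nat.mod_eq_of_lt (by omega)] at h2
  by_contra hne
  rcases Nat.lt_or_ge i j with hlt | hge
  · exact absurd h2 (Nat.ne_of_lt (gval_mono d hlt))
  · exact absurd h2.symm (Nat.ne_of_lt (gval_mono d (by omega)))

lemma gval_cover (d : ℕ) (hd : d ≤ k) (r : ℕ) (hr : r ≤ 3*k) :
    (∃ j, j ≤ k ∧ gval d j = r) ∨ (∃ j, j ≤ k ∧ gval d j = r + 1) ∨
    (1 ≤ r ∧ ∃ j, j ≤ k ∧ gval d j = r - 1) ∨ r = 3*k := by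
  rcases Nat.eq_zero_or_pos r with rfl | hr1
  · exact Or.inl ⟨0, by omega, rfl⟩
  obtain ⟨i, hi⟩ : ∃ i, i = (r + 2) / 3 := ⟨_, rfl⟩
  have h3 : 3 * ((r+2)/3) + (r+2) % 3 = r + 2 := Nat.div_add_mod (r+2) 3
  have hm3 : (r+2) % 3 < 3 := Nat.mod_lt _ (by omega)
  have hik : i ≤ k := by omega
  have hi1 : 1 ≤ i := by omega
  rcases le_or_gt i d with hid | hid
  · have hg : gval d i = 3*i - 1 := by
      unfold gval; split_ifs <;> (try exact (by assumption : False).elim) <;> omega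
    have hcase : r = 3*i - 2 ∨ r = 3*i - 1 ∨ r = 3*i := by omega
    rcases hcase with h | h | h
    · exact Or.inr (Or.inl ⟨i, hik, by omega⟩)
    · exact Or.inl ⟨i, hik, by omega⟩
    · exact Or.inr (Or.inr (Or.inl ⟨by omega, i, hik, by omega⟩))
  · have hg : gval d i = 3*i - 2 := by
      unfold gval; split_ifs <;> (try exact (by assumption : False).elim) <;> omega
    have hcase : r = 3*i - 2 ∨ r = 3*i - 1 ∨ r = 3*i := by omega
    rcases hcase with h | h | h
    · exact Or.inl ⟨i, hik, by omega⟩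
    · exact Or.inr (Or.inr (Or.inl ⟨by omega, i, hik, by omega⟩))
    · rcases Nat.lt_or_ge i k with hik2 | hik2
      · have hg2 : gval d (i+1) = 3*i + 1 := by
          unfold gval; split_ifs <;> (try exact (by assumption : False).elim) <;> omega
        exact Or.inr (Or.inl ⟨i+1, by omega, by omega⟩)
      · exact Or.inr (Or.inr (Or.inr (by omega)))

lemma dom_F (a : V k) (d : ℕ) (hd : d ≤ k) : DomW (F a d) := by
  intro v
  set r := (v - a).val with hrdef
  have hv : v = a + ((r : ℕ) : V k) := by
    rw [hrdef, Fin.cast_val_eq_self]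
    ring
  have hrk : r ≤ 3*k := by
    have := (v - a).isLt
    omega
  rcases gval_cover hk d hd r hrk with ⟨j, hj, hg⟩ | ⟨j, hj, hg⟩ | ⟨hr1, j, hj, hg⟩ | h3k
  · left; rw [mem_F]; exact ⟨j, hj, by rw [hv, hg]⟩
  · right; left; rw [mem_F]
    refine ⟨j, hj, ?_⟩
    rw [hv, hg]
    push_cast
    ring
  · right; right; rw [mem_F]
    refine ⟨j, hj, ?_⟩
    rw [hv, hg]
    have hr2 : ((r : ℕ) : V k) = ((r - 1 : ℕ) : V k) + 1 := by
      conv_lhs => rw [show r = (r-1)+1 from by omega]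
      push_cast
      ring
    rw [hr2]
    ring
  · right; left; rw [mem_F]
    refine ⟨0, by omega, ?_⟩
    rw [hv, h3k]
    have hcast : ((3*k : ℕ) : V k) + 1 = ((3*k+1 : ℕ) : V k) := by push_cast; ring
    have hzero : ((3*k+1 : ℕ) : V k) = 0 := by
      exact_mod_cast Fin.natCast_self (3*k+1)
    rw [add_assoc, hcast, hzero]
    simp [gval]

-- pure arithmetic facts about gval
lemma gval_succ_eq (d i j : ℕ) (hd : d ≤ k) (hi : i ≤ k) (hj : j ≤ k)
    (h : gval d j = gval d i + 1) : d = 0 ∧ i = 0 ∧ j = 1 := by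
  unfold gval at h
  split_ifs at h <;> omega

lemma gval_add2_eq (d i j : ℕ) (hd1 : 1 ≤ d) (hd : d ≤ k) (hi : i ≤ k) (hj : j ≤ k)
    (h : gval d j = gval d i + 2) : (i = 0 ∧ j = 1) ∨ (i = d ∧ j = d + 1) := by
  unfold gval at h
  split_ifs at h <;> omega

lemma gval_wrap2 (d i j : ℕ) (hd1 : 1 ≤ d) (hd : d ≤ k) (hi : i ≤ k) (hj : j ≤ k)
    (h : gval d i + 2 = gval d j + (3*k+1)) : i = d ∧ d = k ∧ j = 0 := by
  unfold gval at h
  split_ifs at h <;> omega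

lemma apair (a : V k) (d : ℕ) (hd : d ≤ k) (x : V k)
    (h1 : x ∈ F a d) (h2 : x + 1 ∈ F a d) : d = 0 ∧ x = a := by
  rw [mem_F] at h1 h2
  obtain ⟨i, hi, rfl⟩ := h1
  obtain ⟨j, hj, hx⟩ := h2
  have h3 : a + ((gval d i + 1 : ℕ) : V k) = a + ((gval d j : ℕ) : V k) := by
    calc a + ((gval d i + 1 : ℕ) : V k)
        = (a + ((gval d i : ℕ) : V k)) + 1 := by push_cast; ring
      _ = a + ((gval d j : ℕ) : V k) := hx
  have h4 := add_cast_inj k a _ _ h3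
  have b1 := gval_le (k := k) d i hi
  have b2 := gval_le (k := k) d j hj
  rw [Nat.mod_eq_of_lt (by omega), Nat.mod_eq_of_lt (by omega)] at h4
  obtain ⟨hd0, hi0, _⟩ := gval_succ_eq hk d i j hd hi hj h4.symm
  refine ⟨hd0, ?_⟩
  rw [hi0]
  simp [gval]

lemma a_a1_mem (a : V k) : a ∈ F a 0 ∧ a + 1 ∈ F a 0 := by
  constructor
  · rw [mem_F]; exact ⟨0, by omega, by simp [gval]⟩
  · rw [mem_F]
    refine ⟨1, hk, ?_⟩
    have : gval 0 1 = 1 := by unfold gval; norm_num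
    rw [this]
    push_cast
    ring

lemma t2pair_mem (a : V k) (d : ℕ) (hd1 : 1 ≤ d) (hd : d ≤ k) :
    (a ∈ F a d ∧ a + 2 ∈ F a d) ∧
    ((a + ((3*d-1:ℕ) : V k)) ∈ F a d ∧ (a + ((3*d-1:ℕ) : V k)) + 2 ∈ F a d) := by
  have hg1 : gval d 1 = 2 := by
    unfold gval; split_ifs <;> (try exact (by assumption : False).elim) <;> omega
  have hgd : gval d d = 3*d-1 := by
    unfold gval; split_ifs <;> (try exact (by assumption : False).elim) <;> omega
  refine ⟨⟨?_, ?_⟩, ?_, ?_⟩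
  · rw [mem_F]; exact ⟨0, by omega, by simp [gval]⟩
  · rw [mem_F]
    refine ⟨1, by omega, ?_⟩
    rw [hg1]; push_cast; ring
  · rw [mem_F]; exact ⟨d, hd, by rw [hgd]⟩
  · rw [mem_F]
    rcases Nat.lt_or_ge d k with hdk2 | hdk2
    · refine ⟨d+1, by omega, ?_⟩
      have hgd1 : gval d (d+1) = 3*d+1 := by
        unfold gval; split_ifs <;> (try exact (by assumption : False).elim) <;> omega
      rw [hgd1, show (3*d+1 : ℕ) = (3*d-1) + 2 from by omega]
      push_cast
      ring
    · -- d = k : wraps around to a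
      have hdk3 : d = k := by omega
      refine ⟨0, by omega, ?_⟩
      have : ((3*d-1 : ℕ) : V k) + 2 = ((3*k+1 : ℕ) : V k) := by
        have h2 : (3*d-1 : ℕ) + 2 = 3*k+1 := by omega
        calc ((3*d-1 : ℕ) : V k) + 2 = (((3*d-1) + 2 : ℕ) : V k) := by push_cast; ring
          _ = ((3*k+1 : ℕ) : V k) := by rw [h2]
      rw [add_assoc, this, show ((3*k+1 : ℕ) : V k) = 0 from by exact_mod_cast Fin.natCast_self (3*k+1)]
      simp [gval]

lemma t2pair_char (a : V k) (d : ℕ) (hd1 : 1 ≤ d) (hd : d ≤ k) (x : V k)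
    (h1 : x ∈ F a d) (h2 : x + 2 ∈ F a d) : x = a ∨ x = a + ((3*d-1:ℕ) : V k) := by
  rw [mem_F] at h1 h2
  obtain ⟨i, hi, rfl⟩ := h1
  obtain ⟨j, hj, hx⟩ := h2
  have h3 : a + ((gval d i + 2 : ℕ) : V k) = a + ((gval d j : ℕ) : V k) := by
    calc a + ((gval d i + 2 : ℕ) : V k)
        = (a + ((gval d i : ℕ) : V k)) + 2 := by push_cast; ring
      _ = a + ((gval d j : ℕ) : V k) := hx
  have h4 := add_cast_inj k a _ _ h3
  have b1 := gval_le (k := k) d i hi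
  have b2 := gval_le (k := k) d j hj
  have hgd : gval d d = 3*d-1 := by
    unfold gval; split_ifs <;> (try exact (by assumption : False).elim) <;> omega
  rcases modeq_cases (3*k+1) _ _ (by omega) h4 (by omega) (by omega) with h5 | h5 | h5
  · rcases gval_add2_eq hk d i j hd1 hd hi hj h5.symm with ⟨hi0, _⟩ | ⟨hid, _⟩
    · left; rw [hi0]; simp [gval]
    · right; rw [hid, hgd]
  · omega
  · obtain ⟨hid, _, _⟩ := gval_wrap2 hk d i j hd1 hd hi hj (by omega)
    right; rw [hid, hgd]

lemma cast_partner (a : V k) (d : ℕ) (hd1 : 1 ≤ d) (hd : d ≤ k) :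
    (a + ((3*d-1:ℕ) : V k)) + ((3*(k+1-d)-1 : ℕ) : V k) = a := by
  have h1 : (3*d-1) + (3*(k+1-d)-1) = 3*k+1 := by omega
  rw [add_assoc, ← Nat.cast_add, h1,
    show ((3*k+1 : ℕ) : V k) = 0 from by exact_mod_cast Fin.natCast_self (3*k+1), add_zero]

lemma cast3d_ne (a : V k) (d : ℕ) (hd1 : 1 ≤ d) (hd : d ≤ k) :
    a + ((3*d-1:ℕ) : V k) ≠ a := by
  intro hcon
  have h1 : a + ((3*d-1:ℕ) : V k) = a + ((0:ℕ) : V k) := by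
    rw [hcon]; simp
  have h2 := add_cast_inj k a _ _ h1
  rw [Nat.mod_eq_of_lt (by omega), Nat.mod_eq_of_lt (by omega)] at h2
  omega

lemma F_inj (a a' : V k) (d d' : ℕ) (hd : d ≤ k) (hd' : d' ≤ k)
    (hc : d = 0 ∨ a.val < (a + ((3*d-1:ℕ) : V k)).val)
    (hc' : d' = 0 ∨ a'.val < (a' + ((3*d'-1:ℕ) : V k)).val)
    (h : F a d = F a' d') : a = a' ∧ d = d' := by
  rcases Nat.eq_zero_or_pos d with rfl | hd1 <;> rcases Nat.eq_zero_or_pos d' with rfl | hd1'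
  · have hm := a_a1_mem hk a'
    rw [← h] at hm
    have h2 := apair hk a 0 hd _ hm.1 hm.2
    exact ⟨h2.2.symm, rfl⟩
  · have hm := a_a1_mem hk a
    rw [h] at hm
    have h2 := apair hk a' d' hd' _ hm.1 hm.2
    omega
  · have hm := a_a1_mem hk a'
    rw [← h] at hm
    have h2 := apair hk a d hd _ hm.1 hm.2
    omega
  · obtain ⟨⟨hma1, hma2⟩, ⟨hmb1, hmb2⟩⟩ := t2pair_mem hk a d hd1 hd
    rw [h] at hma1 hma2 hmb1 hmb2
    have hva : a.val < (a + ((3*d-1:ℕ) : V k)).val := by rcases hc with h0 | h0; omega; exact h0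
    have hva' : a'.val < (a' + ((3*d'-1:ℕ) : V k)).val := by rcases hc' with h0 | h0; omega; exact h0
    have hcha := t2pair_char hk a' d' hd1' hd' a hma1 hma2
    have hchb := t2pair_char hk a' d' hd1' hd' _ hmb1 hmb2
    rcases hcha with rfl | hab'
    · -- a = a'
      rcases hchb with hba | hbb
      · exfalso
        rw [hba] at hva
        exact lt_irrefl _ hva
      · -- b = b'
        have h2 := add_cast_inj k a _ _ hbb
        rw [Nat.mod_eq_of_lt (by omega), Nat.mod_eq_of_lt (by omega)] at h2
        exact ⟨rfl, by omega⟩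
    · -- a = a' + (3d'-1) : combined with constraints gives contradiction
      exfalso
      obtain ⟨⟨hma1', hma2'⟩, ⟨hmb1', hmb2'⟩⟩ := t2pair_mem hk a' d' hd1' hd'
      rw [← h] at hma1' hma2'
      have hcha' := t2pair_char hk a d hd1 hd a' hma1' hma2'
      rcases hcha' with haa | ha'b
      · rw [haa] at hab'
        exact cast3d_ne hk a d' hd1' hd' hab'.symm
      · rw [← ha'b] at hva
        rw [← hab'] at hva'
        omega

end FProps

section Count

lemma card_filter_val_lt (m : ℕ) (hm : m ≤ 3*k+1) :
    ((univ : Finset (V k)).filter (fun a => a.val < m)).card = m := by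
  classical
  conv_rhs => rw [← card_range m]
  apply Finset.card_bij (fun (a : V k) _ => a.val)
  · intro a ha
    simp only [mem_filter] at ha
    exact mem_range.mpr ha.2
  · intro a _ b _ hab
    exact Fin.ext hab
  · intro r hr
    refine ⟨⟨r, by have := mem_range.mp hr; omega⟩, ?_, rfl⟩
    simp only [mem_filter, mem_univ, true_and]
    exact mem_range.mp hr

lemma count_d (c : ℕ) (hc1 : 1 ≤ c) (hc2 : c < 3*k+1) :
    ((univ : Finset (V k)).filter (fun a => a.val < (a + ((c:ℕ) : V k)).val)).card
      = 3*k+1 - c := by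
  classical
  have hcond : ∀ a : V k, (a.val < (a + ((c:ℕ) : V k)).val) ↔ (a.val < 3*k+1 - c) := by
    intro a
    have hadd : (a + ((c:ℕ) : V k)).val = (a.val + c) % (3*k+1) := by
      rw [Fin.add_def, valcast' k c hc2]
    rw [hadd]
    have hlt := a.isLt
    rcases Nat.lt_or_ge (a.val + c) (3*k+1) with hl | hl
    · rw [Nat.mod_eq_of_lt hl]; omega
    · rw [Nat.mod_eq_sub_mod hl, Nat.mod_eq_of_lt (by omega)]; omega
  rw [filter_congr (fun a _ => hcond a)]
  exact card_filter_val_lt _ (by omega)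

end Count

/-- parameter set for minimum dominating sets -/
def Qset (k : ℕ) : Finset (Σ _ : ℕ, V k) :=
  (range (k+1)).sigma (fun d => (univ : Finset (V k)).filter
    (fun a => d = 0 ∨ a.val < (a + ((3*d-1:ℕ) : V k)).val))

lemma Qcard (hk : 1 ≤ k) :
    (Qset k).card = (∑ d ∈ range k, ((3*k+1) - (3*d+2))) + (3*k+1) := by
  unfold Qset
  rw [Finset.card_sigma, Finset.sum_range_succ']
  congr 1
  · apply Finset.sum_congr rfl
    intro d hd
    have hdk : d < k := mem_range.mp hd
    have hcond : ∀ a : V k,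
        ((d+1 = 0 ∨ a.val < (a + ((3*(d+1)-1:ℕ) : V k)).val))
          ↔ (a.val < (a + ((3*d+2:ℕ) : V k)).val) := by
      intro a
      rw [show 3*(d+1)-1 = 3*d+2 from by omega]
      constructor
      · rintro (h | h)
        · exact absurd h (by omega)
        · exact h
      · exact fun h => Or.inr h
    rw [filter_congr (fun a _ => hcond a)]
    exact count_d (3*d+2) (by omega) (by omega)
  · rw [Finset.filter_true_of_mem (fun a _ => Or.inl rfl), card_univ]
    simp

lemma gauss (m : ℕ) : 2 * (∑ j ∈ range m, (3*j+2)) = 3*(m*m) + m := by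
  induction m with
  | zero => simp
  | succ m ih =>
      rw [Finset.sum_range_succ]
      have h2 : 3*((m+1)*(m+1)) = 3*(m*m) + 6*m + 3 := by ring
      omega

lemma sum_reflect (hk : 1 ≤ k) :
    ∑ d ∈ range k, ((3*k+1) - (3*d+2)) = ∑ j ∈ range k, (3*j+2) := by
  rw [← Finset.sum_range_reflect (fun j => 3*j+2) k]
  apply Finset.sum_congr rfl
  intro j hj
  have := mem_range.mp hj
  omega

lemma domNum_eq (hk : 1 ≤ k) : domNum (cycleGraph (3*k+1)) = k + 1 := by
  unfold domNum
  have hwit : (k+1) ∈ {c | ∃ S : Finset (V k), domSet (cycleGraph (3*k+1)) S ∧ S.card = c} :=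
    ⟨F 0 0, (dom_iff hk _).mpr (dom_F hk 0 0 (by omega)), card_F hk 0 0 (by omega)⟩
  apply le_antisymm
  · exact Nat.sInf_le hwit
  · apply le_csInf ⟨k+1, hwit⟩
    rintro c ⟨S, hS, rfl⟩
    have := lower_bound hk S ((dom_iff hk S).mp hS)
    omega

open Classical in
lemma Dfin_eq (hk : 1 ≤ k) :
    ((univ : Finset (Finset (V k))).filter
        (fun S => domSet (cycleGraph (3*k+1)) S ∧ S.card = k+1))
      = (Qset k).image (fun p => F p.2 p.1) := by
  classical
  ext S
  simp only [mem_filter, mem_univ, true_and, mem_image]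
  constructor
  · rintro ⟨hdom', hcard'⟩
    have hdomW := (dom_iff hk S).mp hdom'
    rcases struct hk S hdomW hcard' with ⟨a, hSF⟩ | ⟨a, d, hd1, hdk, hSF, hSF', hne⟩
    · refine ⟨⟨0, a⟩, ?_, hSF.symm⟩
      rw [Qset, Finset.mem_sigma]
      exact ⟨mem_range.mpr (show (0:ℕ) < k+1 by omega), mem_filter.mpr ⟨mem_univ _, Or.inl rfl⟩⟩
    · have hvne : a.val ≠ (a + ((3*d-1:ℕ) : V k)).val := by
        intro hcon
        exact hne (Fin.ext hcon.symm)
      rcases Nat.lt_or_ge a.val (a + ((3*d-1:ℕ) : V k)).val with hv | hv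
      · refine ⟨⟨d, a⟩, ?_, hSF.symm⟩
        rw [Qset, Finset.mem_sigma]
        exact ⟨mem_range.mpr (show d < k+1 by omega), mem_filter.mpr ⟨mem_univ _, Or.inr hv⟩⟩
      · refine ⟨⟨k+1-d, a + ((3*d-1:ℕ) : V k)⟩, ?_, hSF'.symm⟩
        rw [Qset, Finset.mem_sigma]
        have hgoal : (a + ((3*d-1:ℕ) : V k)).val
            < ((a + ((3*d-1:ℕ) : V k)) + ((3*(k+1-d)-1:ℕ) : V k)).val := by
          rw [cast_partner hk a d hd1 hdk]
          omega
        exact ⟨mem_range.mpr (show k+1-d < k+1 by omega),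
          mem_filter.mpr ⟨mem_univ _, Or.inr hgoal⟩⟩
  · rintro ⟨⟨d, a⟩, hmem, rfl⟩
    rw [Qset, Finset.mem_sigma] at hmem
    have hdk : d ≤ k := by
      have h5 : d ∈ range (k+1) := hmem.1
      have := mem_range.mp h5
      omega
    exact ⟨(dom_iff hk _).mpr (dom_F hk a d hdk), card_F hk a d hdk⟩

lemma Q_injOn (hk : 1 ≤ k) :
    Set.InjOn (fun p : Σ _ : ℕ, V k => F p.2 p.1) (Qset k) := by
  rintro ⟨d, a⟩ hp ⟨d', a'⟩ hq h
  rw [Finset.mem_coe, Qset, Finset.mem_sigma, mem_filter] at hp hq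
  have hp1 : d ∈ range (k+1) := hp.1
  have hq1 : d' ∈ range (k+1) := hq.1
  have h1 := F_inj hk a a' d d'
    (by have := mem_range.mp hp1; omega)
    (by have := mem_range.mp hq1; omega)
    hp.2.2 hq.2.2 h
  exact Sigma.ext h1.2 (heq_of_eq h1.1)

lemma final (hk : 1 ≤ k) :
    dominion (cycleGraph (3*k+1)) = ((3*k+1)^2 + 5*(3*k+1))/6 := by
  classical
  unfold dominion
  rw [domNum_eq hk, Nat.card_eq_fintype_card, Fintype.card_subtype]
  rw [Dfin_eq hk, Finset.card_image_of_injOn (Q_injOn hk), Qcard hk, sum_reflect hk]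
  have hg := gauss k
  have hsq : (3*k+1)^2 = 9*(k*k) + 6*k + 1 := by ring
  omega

end Zeta


theorem stmt12 (n : ℕ) (hn : 4 ≤ n) (hmod : n % 3 = 1) :
    dominion (cycleGraph n) = (n ^ 2 + 5 * n) / 6 := by
  obtain ⟨k, rfl⟩ : ∃ k, n = 3*k+1 := ⟨n/3, by omega⟩
  have hk : 1 ≤ k := by omega
  exact Zeta.final hk
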